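/- Consider an Intermediary grid with parameters (n, m, (r_i), (c_j), (d_i), (b_j), U) satisfying the gadget structure with parameters g, A₂, A₃, A₄: namely, n ≥ m ≥ 2; g ≥ 2 is an integer dividing both n−1 and m−1; r_i = i mod g and c_j = j mod g for all i, j; A₂, A₃, A₄ are positive integers with A₃ > n²·A₂ and A₄ ≥ n·A₃ + n·A₂; for every row index i < n−1 with i ≡ 0 (mod g) one has d_i = (n−i)·A₃; for every row index i < n−1 with i ≡ g−1 (mod g) one has d_i = A₄ − (n−(i−g+1))·A₃; every other row index i satisfies 0 ≤ d_i ≤ n·A₂; b_j = 1 for every column index j < m−1 with j ≡ 0 (mod g) or j ≡ g−1 (mod g); U > 1 and (m−1)·A₄ < √U. For multiples i₀, j₀ of g with i₀ + g ≤ n−1 and j₀ + g ≤ m−1, the main diagonal arcs of the gadget with top-left corner (i₀,j₀) are the arcs (i₀+p, j₀+p)→(i₀+p+1, j₀+p+1) for 0 ≤ p ≤ g−1. Then every minimum-weight directed path from (0,0) to (n−1,m−1) that uses at least one main diagonal arc of some gadget uses all g main diagonal arcs of that gadget. -/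

import Mathlib

/-- A single step of a monotone (directed) grid path:
coordinates change by (1,0), (0,1), or (1,1). -/
def MStep (u v : ℕ × ℕ) : Prop :=
  (v.1 = u.1 + 1 ∧ v.2 = u.2) ∨ (v.1 = u.1 ∧ v.2 = u.2 + 1) ∨
    (v.1 = u.1 + 1 ∧ v.2 = u.2 + 1)

/-- `π` is a directed grid path from `s` to `t`. -/
def MPath (π : List (ℕ × ℕ)) (s t : ℕ × ℕ) : Prop :=
  π ≠ [] ∧ π.head? = some s ∧ π.getLast? = some t ∧ π.Chain' MStep

/-- Weight of a directed path: the sum of the weights of its arcs. -/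
noncomputable def acost (w : ℕ × ℕ → ℕ × ℕ → ℝ) (π : List (ℕ × ℕ)) : ℝ :=
  ((π.zip π.tail).map fun p => w p.1 p.2).sum

/-- Arc weights of the Intermediary grid: horizontal arcs `(i,j)→(i,j+1)` and
vertical arcs `(i,j)→(i+1,j)` have weight `U`; the diagonal arc
`(i,j)→(i+1,j+1)` has weight `d_i·b_j` if `r_i = c_j` and `√U` otherwise. -/
noncomputable def interW (r c d b : ℕ → ℕ) (U : ℕ) (u v : ℕ × ℕ) : ℝ :=
  if v = (u.1 + 1, u.2 + 1) then
    (if r u.1 = c u.2 then ((d u.1 * b u.2 : ℕ) : ℝ) else Real.sqrt U)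
  else (U : ℝ)

/-- The potential function used for the lower bound. -/
noncomputable def phi (n g A₃ A₄ U : ℕ) (p : ℕ × ℕ) : ℝ :=
  (U : ℝ) * ((p.1 : ℝ) - (p.2 : ℝ)) + (A₄ : ℝ) * ((p.2 / g : ℕ) : ℝ) +
    (if p.2 % g = 0 then 0 else ((n : ℝ) - (p.1 : ℝ) + ((p.2 % g : ℕ) : ℝ)) * (A₃ : ℝ))

lemma phi_zero (n g A₃ A₄ U i j : ℕ) (h : j % g = 0) :
    phi n g A₃ A₄ U (i, j) =
      (U : ℝ) * ((i : ℝ) - (j : ℝ)) + (A₄ : ℝ) * ((j / g : ℕ) : ℝ) := by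
  simp [phi, h]

lemma phi_pos (n g A₃ A₄ U i j : ℕ) (h : j % g ≠ 0) :
    phi n g A₃ A₄ U (i, j) =
      (U : ℝ) * ((i : ℝ) - (j : ℝ)) + (A₄ : ℝ) * ((j / g : ℕ) : ℝ) +
        ((n : ℝ) - (i : ℝ) + ((j % g : ℕ) : ℝ)) * (A₃ : ℝ) := by
  simp [phi, h]

lemma succ_mod_div_lt (g j : ℕ) (hg : 0 < g) (h : j % g + 1 < g) :
    (j + 1) % g = j % g + 1 ∧ (j + 1) / g = j / g := by
  have hmd := Nat.mod_add_div j g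
  have h2 := (Nat.div_mod_unique hg (a := j + 1) (c := j % g + 1) (d := j / g)).2
    ⟨by omega, h⟩
  exact ⟨h2.2, h2.1⟩

lemma succ_mod_div_eq (g j : ℕ) (hg : 0 < g) (h : j % g + 1 = g) :
    (j + 1) % g = 0 ∧ (j + 1) / g = j / g + 1 := by
  have hmd := Nat.mod_add_div j g
  have hmul : g * (j / g + 1) = g * (j / g) + g := by ring
  have h2 := (Nat.div_mod_unique hg (a := j + 1) (c := 0) (d := j / g + 1)).2
    ⟨by omega, by omega⟩
  exact ⟨h2.2, h2.1⟩

set_option maxHeartbeats 1000000 in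
/-- Key per-arc slack lemma. -/
lemma slack_key (n m : ℕ) (r c d b : ℕ → ℕ) (U : ℕ) (g A₂ A₃ A₄ : ℕ)
    (hmn : m ≤ n) (hm : 2 ≤ m)
    (hg : 2 ≤ g) (hgm : g ∣ (m - 1))
    (hr : ∀ i < n, r i = i % g) (hc : ∀ j < m, c j = j % g)
    (hA₃ : 0 < A₃)
    (hA₄big : n * A₃ + n * A₂ ≤ A₄)
    (hd0 : ∀ i, i < n - 1 → i % g = 0 → d i = (n - i) * A₃)
    (hdlast : ∀ i, i < n - 1 → i % g = g - 1 → d i = A₄ - (n - (i + 1 - g)) * A₃)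
    (hbact : ∀ j, j < m - 1 → (j % g = 0 ∨ j % g = g - 1) → b j = 1)
    (hU : 1 < U)
    (hUbig : (((m - 1) * A₄ : ℕ) : ℝ) < Real.sqrt U)
    (u v : ℕ × ℕ) (hstep : MStep u v) (h1 : v.1 ≤ n - 1) (h2 : v.2 ≤ m - 1) :
    0 ≤ interW r c d b U u v - (phi n g A₃ A₄ U v - phi n g A₃ A₄ U u) ∧
      (((v.1 = u.1 ∧ v.2 = u.2 + 1) ∨
        (v.1 = u.1 + 1 ∧ v.2 = u.2 ∧ u.2 % g ≠ 0) ∨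
        (v.1 = u.1 + 1 ∧ v.2 = u.2 + 1 ∧ r u.1 ≠ c u.2)) →
        (A₃ : ℝ) ≤ interW r c d b U u v - (phi n g A₃ A₄ U v - phi n g A₃ A₄ U u)) := by
  obtain ⟨i, j⟩ := u
  obtain ⟨i', j'⟩ := v
  simp only at h1 h2
  have hg0 : 0 < g := by omega
  have hm1g : g ≤ m - 1 := Nat.le_of_dvd (by omega) hgm
  have hm3 : 3 ≤ m := by omega
  have hn3 : 3 ≤ n := by omega
  -- numeric facts over ℕ
  have hnA : n * A₃ ≤ A₄ := by omega
  have hA34 : A₃ ≤ A₄ := le_trans (Nat.le_mul_of_pos_left A₃ (by omega)) hnA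
  have hnat5 : (n + 1) * A₃ ≤ (m - 1) * A₄ := by
    calc (n + 1) * A₃ ≤ (2 * n) * A₃ := Nat.mul_le_mul_right _ (by omega)
      _ = 2 * (n * A₃) := by ring
      _ ≤ 2 * A₄ := by omega
      _ ≤ (m - 1) * A₄ := Nat.mul_le_mul_right _ (by omega)
  have hnat2 : (n + 2) * A₃ ≤ 2 * ((m - 1) * A₄) := by
    calc (n + 2) * A₃ ≤ (2 * n) * A₃ := Nat.mul_le_mul_right _ (by omega)
      _ = 2 * (n * A₃) := by ring
      _ ≤ 2 * A₄ := by omega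
      _ ≤ 2 * ((m - 1) * A₄) := Nat.mul_le_mul_left _ (Nat.le_mul_of_pos_left A₄ (by omega))
  have hnat6 : A₄ + A₃ ≤ (m - 1) * A₄ := by
    have h2A : 2 * A₄ ≤ (m - 1) * A₄ := Nat.mul_le_mul_right _ (by omega)
    omega
  -- real facts
  have hUR : (1 : ℝ) ≤ (U : ℝ) := by exact_mod_cast hU.le
  have hsq : Real.sqrt (U : ℝ) ^ 2 = (U : ℝ) := Real.sq_sqrt (by positivity)
  have hs0 : 0 ≤ Real.sqrt (U : ℝ) := Real.sqrt_nonneg _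
  have h1s : 1 ≤ Real.sqrt (U : ℝ) := by nlinarith
  have hsUU : Real.sqrt (U : ℝ) ≤ (U : ℝ) := by nlinarith
  have hUbR : ((m - 1 : ℕ) : ℝ) * (A₄ : ℝ) < Real.sqrt (U : ℝ) := by
    rw [Nat.cast_mul] at hUbig; exact hUbig
  have hnat5R : ((n : ℝ) + 1) * A₃ ≤ ((m - 1 : ℕ) : ℝ) * A₄ := by exact_mod_cast hnat5
  have hnat2R : ((n : ℝ) + 2) * A₃ ≤ 2 * (((m - 1 : ℕ) : ℝ) * A₄) := by exact_mod_cast hnat2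
  have hnat6R : (A₄ : ℝ) + A₃ ≤ ((m - 1 : ℕ) : ℝ) * A₄ := by exact_mod_cast hnat6
  have hA34R : (A₃ : ℝ) ≤ (A₄ : ℝ) := by exact_mod_cast hA34
  have hA3nn : (0 : ℝ) ≤ (A₃ : ℝ) := by positivity
  have hinn : (0 : ℝ) ≤ (i : ℝ) := by positivity
  rcases hstep with ⟨e1, e2⟩ | ⟨e1, e2⟩ | ⟨e1, e2⟩
  · -- vertical step
    simp only at e1 e2 ⊢
    subst e1
    rw [e2] at h2 ⊢
    have hw : interW r c d b U (i, j) (i + 1, j) = U := by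
      simp [interW]
    by_cases hj : j % g = 0
    · have hΦ : phi n g A₃ A₄ U (i + 1, j) - phi n g A₃ A₄ U (i, j) = U := by
        rw [phi_zero n g A₃ A₄ U (i + 1) j hj, phi_zero n g A₃ A₄ U i j hj]
        push_cast
        ring
      rw [hw, hΦ]
      constructor
      · linarith
      · rintro (⟨b1, b2⟩ | ⟨b1, b2, b3⟩ | ⟨b1, b2, b3⟩) <;> omega
    · have hΦ : phi n g A₃ A₄ U (i + 1, j) - phi n g A₃ A₄ U (i, j) = U - A₃ := by
        rw [phi_pos n g A₃ A₄ U (i + 1) j hj, phi_pos n g A₃ A₄ U i j hj]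
        push_cast
        ring
      rw [hw, hΦ]
      constructor
      · linarith
      · intro _; linarith
  · -- horizontal step
    simp only at e1 e2 ⊢
    subst e2
    rw [e1] at h1 ⊢
    have hw : interW r c d b U (i, j) (i, j + 1) = U := by
      have : ¬ ((i, j + 1) = ((i, j).1 + 1, (i, j).2 + 1)) := by simp
      simp [interW, this]
    have hjm : j % g < g := Nat.mod_lt _ hg0
    by_cases hcase : j % g + 1 = g
    · obtain ⟨hm1, hm2⟩ := succ_mod_div_eq g j hg0 hcase
      have hj0 : ¬ (j % g = 0) := by omega
      have hΦ : phi n g A₃ A₄ U (i, j + 1) - phi n g A₃ A₄ U (i, j) =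
          -(U : ℝ) + A₄ - ((n : ℝ) - i + ((j % g : ℕ) : ℝ)) * A₃ := by
        rw [phi_zero n g A₃ A₄ U i (j + 1) hm1, phi_pos n g A₃ A₄ U i j hj0, hm2]
        push_cast
        ring
      have hiR : (i : ℝ) ≤ (n : ℝ) - 1 := by
        have : i + 1 ≤ n := by omega
        have := (Nat.cast_le (α := ℝ)).2 this
        push_cast at this
        linarith
      have hjgR : (1 : ℝ) ≤ ((j % g : ℕ) : ℝ) := by
        have : 1 ≤ j % g := by omega
        exact_mod_cast this
      have hprod : (0 : ℝ) ≤ ((n : ℝ) - i + ((j % g : ℕ) : ℝ)) * A₃ :=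
        mul_nonneg (by linarith) hA3nn
      rw [hw, hΦ]
      constructor
      · linarith
      · intro _; linarith
    · obtain ⟨hm1, hm2⟩ := succ_mod_div_lt g j hg0 (by omega)
      by_cases hj0 : j % g = 0
      · have hΦ : phi n g A₃ A₄ U (i, j + 1) - phi n g A₃ A₄ U (i, j) =
            -(U : ℝ) + ((n : ℝ) - i + 1) * A₃ := by
          rw [phi_pos n g A₃ A₄ U i (j + 1) (by omega), phi_zero n g A₃ A₄ U i j hj0,
            hm1, hm2, hj0]
          push_cast
          ring
        have hprod : ((n : ℝ) - i + 1) * A₃ ≤ ((n : ℝ) + 1) * A₃ :=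
          mul_le_mul_of_nonneg_right (by linarith) hA3nn
        rw [hw, hΦ]
        constructor
        · linarith
        · intro _; linarith
      · have hΦ : phi n g A₃ A₄ U (i, j + 1) - phi n g A₃ A₄ U (i, j) =
            -(U : ℝ) + A₃ := by
          rw [phi_pos n g A₃ A₄ U i (j + 1) (by omega), phi_pos n g A₃ A₄ U i j hj0,
            hm1, hm2]
          push_cast
          ring
        rw [hw, hΦ]
        constructor
        · linarith
        · intro _; linarith
  · -- diagonal step
    simp only at e1 e2 ⊢
    subst e1; subst e2
    have hi2 : i + 2 ≤ n := by omega
    have hj2 : j + 2 ≤ m := by omega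
    have hjm : j % g < g := Nat.mod_lt _ hg0
    by_cases hrc : r i = c j
    · have hij : i % g = j % g := by
        rw [hr i (by omega), hc j (by omega)] at hrc; exact hrc
      by_cases hj0 : j % g = 0
      · -- matched, first column of a block
        have hd : d i = (n - i) * A₃ := hd0 i (by omega) (by omega)
        have hb : b j = 1 := hbact j (by omega) (Or.inl hj0)
        have hw : interW r c d b U (i, j) (i + 1, j + 1) = ((n : ℝ) - i) * A₃ := by
          have hw0 : interW r c d b U (i, j) (i + 1, j + 1) = ((d i * b j : ℕ) : ℝ) := by
            simp [interW, hrc]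
          rw [hw0, hd, hb, mul_one, Nat.cast_mul, Nat.cast_sub (by omega : i ≤ n)]
        obtain ⟨hm1, hm2⟩ := succ_mod_div_lt g j hg0 (by omega)
        have hΦ : phi n g A₃ A₄ U (i + 1, j + 1) - phi n g A₃ A₄ U (i, j) =
            ((n : ℝ) - i) * A₃ := by
          rw [phi_pos n g A₃ A₄ U (i + 1) (j + 1) (by omega), phi_zero n g A₃ A₄ U i j hj0,
            hm1, hm2, hj0]
          push_cast
          ring
        rw [hw, hΦ]
        constructor
        · linarith
        · rintro (⟨b1, b2⟩ | ⟨b1, b2, b3⟩ | ⟨b1, b2, b3⟩) <;>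
            first | omega | exact absurd hrc b3
      · by_cases hjl : j % g = g - 1
        · -- matched, last column of a block
          have hig : i % g = g - 1 := by omega
          have higi : g - 1 ≤ i := le_trans (by omega) (Nat.mod_le i g)
          have hd : d i = A₄ - (n - (i + 1 - g)) * A₃ := hdlast i (by omega) hig
          have hb : b j = 1 := hbact j (by omega) (Or.inr hjl)
          have hle : (n - (i + 1 - g)) * A₃ ≤ A₄ :=
            le_trans (Nat.mul_le_mul_right _ (Nat.sub_le n _)) hnA
          have hw : interW r c d b U (i, j) (i + 1, j + 1) =
              (A₄ : ℝ) - ((n : ℝ) - ((i : ℝ) + 1 - g)) * A₃ := by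
            have hw0 : interW r c d b U (i, j) (i + 1, j + 1) = ((d i * b j : ℕ) : ℝ) := by
              simp [interW, hrc]
            rw [hw0, hd, hb, mul_one, Nat.cast_sub hle, Nat.cast_mul,
              Nat.cast_sub (by omega : i + 1 - g ≤ n), Nat.cast_sub (by omega : g ≤ i + 1)]
            push_cast
            ring
          obtain ⟨hm1, hm2⟩ := succ_mod_div_eq g j hg0 (by omega)
          have hΦ : phi n g A₃ A₄ U (i + 1, j + 1) - phi n g A₃ A₄ U (i, j) =
              (A₄ : ℝ) - ((n : ℝ) - i + ((g : ℝ) - 1)) * A₃ := by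
            rw [phi_zero n g A₃ A₄ U (i + 1) (j + 1) hm1, phi_pos n g A₃ A₄ U i j hj0,
              hm2, hjl, Nat.cast_sub (by omega : 1 ≤ g)]
            push_cast
            ring
          rw [hw, hΦ]
          constructor
          · apply le_of_eq; ring
          · rintro (⟨b1, b2⟩ | ⟨b1, b2, b3⟩ | ⟨b1, b2, b3⟩) <;>
            first | omega | exact absurd hrc b3
        · -- matched, middle column
          obtain ⟨hm1, hm2⟩ := succ_mod_div_lt g j hg0 (by omega)
          have hw : interW r c d b U (i, j) (i + 1, j + 1) = ((d i * b j : ℕ) : ℝ) := by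
            simp [interW, hrc]
          have hΦ : phi n g A₃ A₄ U (i + 1, j + 1) - phi n g A₃ A₄ U (i, j) = 0 := by
            rw [phi_pos n g A₃ A₄ U (i + 1) (j + 1) (by omega), phi_pos n g A₃ A₄ U i j hj0,
              hm1, hm2]
            push_cast
            ring
          rw [hw, hΦ]
          constructor
          · have : (0 : ℝ) ≤ ((d i * b j : ℕ) : ℝ) := by positivity
            linarith
          · rintro (⟨b1, b2⟩ | ⟨b1, b2, b3⟩ | ⟨b1, b2, b3⟩) <;>
            first | omega | exact absurd hrc b3
    · -- unmatched diagonal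
      have hw : interW r c d b U (i, j) (i + 1, j + 1) = Real.sqrt U := by
        simp [interW, hrc]
      by_cases hj0 : j % g = 0
      · obtain ⟨hm1, hm2⟩ := succ_mod_div_lt g j hg0 (by omega)
        have hΦ : phi n g A₃ A₄ U (i + 1, j + 1) - phi n g A₃ A₄ U (i, j) =
            ((n : ℝ) - i) * A₃ := by
          rw [phi_pos n g A₃ A₄ U (i + 1) (j + 1) (by omega), phi_zero n g A₃ A₄ U i j hj0,
            hm1, hm2, hj0]
          push_cast
          ring
        have hprod : ((n : ℝ) - i) * A₃ ≤ (n : ℝ) * A₃ :=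
          mul_le_mul_of_nonneg_right (by linarith) hA3nn
        rw [hw, hΦ]
        constructor
        · linarith
        · intro _; linarith
      · by_cases hjl : j % g = g - 1
        · obtain ⟨hm1, hm2⟩ := succ_mod_div_eq g j hg0 (by omega)
          have hΦ : phi n g A₃ A₄ U (i + 1, j + 1) - phi n g A₃ A₄ U (i, j) =
              (A₄ : ℝ) - ((n : ℝ) - i + ((g : ℝ) - 1)) * A₃ := by
            rw [phi_zero n g A₃ A₄ U (i + 1) (j + 1) hm1, phi_pos n g A₃ A₄ U i j hj0,
              hm2, hjl, Nat.cast_sub (by omega : 1 ≤ g)]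
            push_cast
            ring
          have hiR : (i : ℝ) ≤ (n : ℝ) - 2 := by
            have := (Nat.cast_le (α := ℝ)).2 hi2
            push_cast at this
            linarith
          have hgR : (2 : ℝ) ≤ (g : ℝ) := by exact_mod_cast hg
          have hprod : (0 : ℝ) ≤ ((n : ℝ) - i + ((g : ℝ) - 1)) * A₃ :=
            mul_nonneg (by linarith) hA3nn
          rw [hw, hΦ]
          constructor
          · linarith
          · intro _; linarith
        · obtain ⟨hm1, hm2⟩ := succ_mod_div_lt g j hg0 (by omega)
          have hΦ : phi n g A₃ A₄ U (i + 1, j + 1) - phi n g A₃ A₄ U (i, j) = 0 := by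
            rw [phi_pos n g A₃ A₄ U (i + 1) (j + 1) (by omega), phi_pos n g A₃ A₄ U i j hj0,
              hm1, hm2]
            push_cast
            ring
          rw [hw, hΦ]
          constructor
          · linarith
          · intro _; linarith


lemma acost_cons_cons (w : ℕ × ℕ → ℕ × ℕ → ℝ) (a b : ℕ × ℕ) (l : List (ℕ × ℕ)) :
    acost w (a :: b :: l) = w a b + acost w (b :: l) := by
  simp [acost]

lemma telescope (φ : ℕ × ℕ → ℝ) :
    ∀ (l : List (ℕ × ℕ)) (a z : ℕ × ℕ), (a :: l).getLast? = some z →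
      (((a :: l).zip l).map (fun p => φ p.2 - φ p.1)).sum = φ z - φ a := by
  intro l
  induction l with
  | nil => intro a z hz; simp_all
  | cons b l ih =>
      intro a z hz
      have hz' : (b :: l).getLast? = some z := by
        rwa [List.getLast?_cons_cons] at hz
      simp only [List.zip_cons_cons, List.map_cons, List.sum_cons]
      rw [ih b z hz']
      ring

lemma sum_map_add (f h : (ℕ × ℕ) × (ℕ × ℕ) → ℝ) (l : List ((ℕ × ℕ) × (ℕ × ℕ))) :
    (l.map (fun x => f x + h x)).sum = (l.map f).sum + (l.map h).sum := by
  induction l with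
  | nil => simp
  | cons a l ih => simp [ih]; ring

lemma chain'_zip {R : ℕ × ℕ → ℕ × ℕ → Prop} :
    ∀ (l : List (ℕ × ℕ)) (a : ℕ × ℕ), List.Chain' R (a :: l) →
      ∀ p ∈ (a :: l).zip l, R p.1 p.2 := by
  intro l
  induction l with
  | nil => intro a _ p hp; simp at hp
  | cons b l ih =>
      intro a h p hp
      rw [List.Chain', List.isChain_cons_cons] at h
      simp only [List.zip_cons_cons, List.mem_cons] at hp
      rcases hp with rfl | hp
      · exact h.1
      · exact ih b h.2 p hp

lemma mem_le_last :
    ∀ (l : List (ℕ × ℕ)) (a z : ℕ × ℕ), List.Chain' MStep (a :: l) →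
      (a :: l).getLast? = some z → ∀ v ∈ a :: l, v.1 ≤ z.1 ∧ v.2 ≤ z.2 := by
  intro l
  induction l with
  | nil => intro a z _ hz v hv; simp_all
  | cons b l ih =>
      intro a z hc hz v hv
      rw [List.Chain', List.isChain_cons_cons] at hc
      have hz' : (b :: l).getLast? = some z := by rwa [List.getLast?_cons_cons] at hz
      rcases List.mem_cons.1 hv with rfl | hv
      · have hb := ih b z hc.2 hz' b List.mem_cons_self
        rcases hc.1 with ⟨h1, h2⟩ | ⟨h1, h2⟩ | ⟨h1, h2⟩ <;> omega
      · exact ih b z hc.2 hz' v hv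

lemma succ_step :
    ∀ (l : List (ℕ × ℕ)) (a z : ℕ × ℕ) (p : (ℕ × ℕ) × (ℕ × ℕ)),
      p ∈ (a :: l).zip l → (a :: l).getLast? = some z → p.2 ≠ z →
      ∃ w, (p.2, w) ∈ (a :: l).zip l := by
  intro l
  induction l with
  | nil => intro a z p hp; simp at hp
  | cons b l ih =>
      intro a z p hp hz hne
      have hz' : (b :: l).getLast? = some z := by rwa [List.getLast?_cons_cons] at hz
      simp only [List.zip_cons_cons, List.mem_cons] at hp
      rcases hp with rfl | hp
      · -- p = (a, b)
        cases l with
        | nil => simp_all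
        | cons c l' =>
            exact ⟨c, by simp [List.zip_cons_cons]⟩
      · obtain ⟨w, hw⟩ := ih b z p hp hz' hne
        exact ⟨w, by simp [List.zip_cons_cons]; right; exact hw⟩

lemma pred_step :
    ∀ (l : List (ℕ × ℕ)) (a : ℕ × ℕ) (p : (ℕ × ℕ) × (ℕ × ℕ)),
      p ∈ (a :: l).zip l → p.1 ≠ a →
      ∃ x, (x, p.1) ∈ (a :: l).zip l := by
  intro l
  induction l with
  | nil => intro a p hp; simp at hp
  | cons b l ih =>
      intro a p hp hne
      simp only [List.zip_cons_cons, List.mem_cons] at hp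
      rcases hp with rfl | hp
      · simp at hne
      · by_cases hb : p.1 = b
        · exact ⟨a, by simp [List.zip_cons_cons, hb]⟩
        · obtain ⟨x, hx⟩ := ih b p hp hb
          exact ⟨x, by simp [List.zip_cons_cons]; right; exact hx⟩

lemma acost_range'_map (w : ℕ × ℕ → ℕ × ℕ → ℝ) (f : ℕ → ℕ × ℕ) :
    ∀ (k s : ℕ), acost w ((List.range' s (k + 1)).map f) =
      ∑ t ∈ Finset.range k, w (f (s + t)) (f (s + t + 1)) := by
  intro k
  induction k with
  | zero => intro s; simp [acost, List.range'_succ]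
  | succ k ih =>
      intro s
      rw [List.range'_succ, show k + 1 = k + 1 from rfl]
      rw [List.map_cons]
      rw [List.range'_succ, List.map_cons, acost_cons_cons, ← List.map_cons, ← List.range'_succ]
      rw [ih (s + 1), Finset.sum_range_succ']
      simp only [Nat.add_zero]
      rw [add_comm]
      congr 1
      apply Finset.sum_congr rfl
      intro t _
      congr 2 <;> omega

lemma mpath_range'_map (f : ℕ → ℕ × ℕ) :
    ∀ (k s : ℕ), (∀ t, s ≤ t → t < s + k → MStep (f t) (f (t + 1))) →
      MPath ((List.range' s (k + 1)).map f) (f s) (f (s + k)) := by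
  intro k
  induction k with
  | zero => intro s _; refine ⟨by simp [List.range'_succ], ?_, ?_, ?_⟩ <;> simp [List.range'_succ, List.Chain']
  | succ k ih =>
      intro s hstep
      have ih' := ih (s + 1) (fun t ht1 ht2 => hstep t (by omega) (by omega))
      obtain ⟨h1, h2, h3, h4⟩ := ih'
      rw [List.range'_succ, List.map_cons]
      refine ⟨by simp, by simp, ?_, ?_⟩
      · cases hl : (List.range' (s+1) (k+1)).map f with
        | nil => simp_all
        | cons y ys =>
            rw [hl] at h3
            rw [List.getLast?_cons_cons, h3]
            congr 2
            omega
      · rw [List.Chain', List.isChain_cons]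
        constructor
        · intro y hy
          have : ((List.range' (s+1) (k+1)).map f).head? = some (f (s+1)) := by
            simp [List.range'_succ]
          rw [this] at hy
          cases hy
          exact hstep s (le_refl _) (by omega)
        · exact h4
lemma sum_range_peel (F : ℕ → ℕ) (g : ℕ) (hg : 2 ≤ g) :
    ∑ s ∈ Finset.range g, F s =
      F 0 + (∑ s ∈ Finset.range (g - 2), F (s + 1)) + F (g - 1) := by
  obtain ⟨g', rfl⟩ : ∃ g', g = g' + 2 := ⟨g - 2, by omega⟩
  rw [show g' + 2 = g' + 1 + 1 from rfl, Finset.sum_range_succ, Finset.sum_range_succ']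
  simp only [Nat.add_sub_cancel, show g' + 1 + 1 - 1 = g' + 1 from by omega,
    show g' + 1 + 1 - 2 = g' from by omega]
  ring

lemma block_bound (n m g A₂ A₃ A₄ : ℕ) (d b : ℕ → ℕ)
    (hb01 : ∀ j, b j ≤ 1)
    (hmn : m ≤ n) (hm : 2 ≤ m) (hg : 2 ≤ g)
    (hnA : n * A₃ ≤ A₄)
    (hd0 : ∀ i, i < n - 1 → i % g = 0 → d i = (n - i) * A₃)
    (hdlast : ∀ i, i < n - 1 → i % g = g - 1 → d i = A₄ - (n - (i + 1 - g)) * A₃)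
    (hdother : ∀ i, i < n - 1 → i % g ≠ 0 → i % g ≠ g - 1 → d i ≤ n * A₂)
    (hbact : ∀ j, j < m - 1 → (j % g = 0 ∨ j % g = g - 1) → b j = 1) :
    ∀ k, k * g ≤ m - 1 →
      ∑ t ∈ Finset.range (k * g), d t * b t ≤ k * A₄ + k * ((g - 2) * (n * A₂)) := by
  intro k
  induction k with
  | zero => simp
  | succ k ih =>
      intro hk
      have hgk : k * g + g ≤ m - 1 := by
        have : (k + 1) * g = k * g + g := by ring
        omega
      have hkg' : k * g ≤ m - 1 := by omega
      rw [show (k + 1) * g = k * g + g from by ring, Finset.sum_range_add]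
      have hblock : ∑ s ∈ Finset.range g, d (k * g + s) * b (k * g + s) ≤
          A₄ + (g - 2) * (n * A₂) := by
        rw [sum_range_peel (fun s => d (k * g + s) * b (k * g + s)) g hg]
        have hmod0 : (k * g) % g = 0 := Nat.mul_mod_left k g
        have h0 : d (k * g + 0) * b (k * g + 0) = (n - k * g) * A₃ := by
          rw [Nat.add_zero, hd0 (k * g) (by omega) hmod0,
            hbact (k * g) (by omega) (Or.inl hmod0), mul_one]
        have hmodl : (k * g + (g - 1)) % g = g - 1 := by
          rw [add_comm, Nat.add_mul_mod_self_right]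
          exact Nat.mod_eq_of_lt (by omega)
        have hl : d (k * g + (g - 1)) * b (k * g + (g - 1)) = A₄ - (n - k * g) * A₃ := by
          rw [hdlast (k * g + (g - 1)) (by omega) hmodl,
            hbact _ (by omega) (Or.inr hmodl), mul_one,
            show k * g + (g - 1) + 1 - g = k * g from by omega]
        have hmid : ∑ s ∈ Finset.range (g - 2), d (k * g + (s + 1)) * b (k * g + (s + 1)) ≤
            (g - 2) * (n * A₂) := by
          calc ∑ s ∈ Finset.range (g - 2), d (k * g + (s + 1)) * b (k * g + (s + 1))
              ≤ ∑ _s ∈ Finset.range (g - 2), n * A₂ := by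
                apply Finset.sum_le_sum
                intro s hs
                rw [Finset.mem_range] at hs
                have hmods : (k * g + (s + 1)) % g = s + 1 := by
                  rw [add_comm, Nat.add_mul_mod_self_right]
                  exact Nat.mod_eq_of_lt (by omega)
                calc d (k * g + (s + 1)) * b (k * g + (s + 1)) ≤ (n * A₂) * 1 :=
                      Nat.mul_le_mul (hdother _ (by omega) (by omega) (by omega)) (hb01 _)
                  _ = n * A₂ := by ring
            _ = (g - 2) * (n * A₂) := by
                rw [Finset.sum_const, Finset.card_range, smul_eq_mul]
        have hsub : (n - k * g) * A₃ ≤ A₄ :=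
          le_trans (Nat.mul_le_mul_right _ (Nat.sub_le _ _)) hnA
        rw [h0, hl]
        generalize hP : (n - k * g) * A₃ = P at hsub ⊢
        generalize hX : (g - 2) * (n * A₂) = X at hmid ⊢
        omega
      calc ∑ t ∈ Finset.range (k * g), d t * b t
            + ∑ t ∈ Finset.range g, d (k * g + t) * b (k * g + t)
          ≤ (k * A₄ + k * ((g - 2) * (n * A₂))) + (A₄ + (g - 2) * (n * A₂)) :=
            Nat.add_le_add (ih hkg') hblock
        _ = (k + 1) * A₄ + (k + 1) * ((g - 2) * (n * A₂)) := by ring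
set_option maxHeartbeats 1600000 in
/-- Consider an Intermediary grid satisfying the gadget
structure with parameters `g, A₂, A₃, A₄` (see the hypotheses below). For
multiples `i₀, j₀` of `g` with `i₀ + g ≤ n−1` and `j₀ + g ≤ m−1`, the main
diagonal arcs of the gadget with top-left corner `(i₀,j₀)` are the arcs
`(i₀+p, j₀+p)→(i₀+p+1, j₀+p+1)` for `0 ≤ p ≤ g−1`. Every minimum-weight
directed path from `(0,0)` to `(n−1,m−1)` that uses at least one main diagonal
arc of some gadget uses all `g` main diagonal arcs of that gadget. -/
theorem stmt10 (n m : ℕ) (r c d b : ℕ → ℕ) (U : ℕ)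
    (g A₂ A₃ A₄ : ℕ)
    (hb01 : ∀ j, b j ≤ 1)
    (hmn : m ≤ n) (hm : 2 ≤ m)
    (hg : 2 ≤ g) (hgn : g ∣ (n - 1)) (hgm : g ∣ (m - 1))
    (hr : ∀ i < n, r i = i % g) (hc : ∀ j < m, c j = j % g)
    (hA₂ : 0 < A₂) (hA₃ : 0 < A₃) (hA₄ : 0 < A₄)
    (hA₃big : n ^ 2 * A₂ < A₃)
    (hA₄big : n * A₃ + n * A₂ ≤ A₄)
    (hd0 : ∀ i, i < n - 1 → i % g = 0 → d i = (n - i) * A₃)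
    (hdlast : ∀ i, i < n - 1 → i % g = g - 1 → d i = A₄ - (n - (i + 1 - g)) * A₃)
    (hdother : ∀ i, i < n - 1 → i % g ≠ 0 → i % g ≠ g - 1 → d i ≤ n * A₂)
    (hbact : ∀ j, j < m - 1 → (j % g = 0 ∨ j % g = g - 1) → b j = 1)
    (hU : 1 < U)
    (hUbig : (((m - 1) * A₄ : ℕ) : ℝ) < Real.sqrt U) :
    ∀ π : List (ℕ × ℕ), MPath π (0, 0) (n - 1, m - 1) →
      (∀ π' : List (ℕ × ℕ), MPath π' (0, 0) (n - 1, m - 1) →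
        acost (interW r c d b U) π ≤ acost (interW r c d b U) π') →
      ∀ i₀ j₀ : ℕ, g ∣ i₀ → g ∣ j₀ → i₀ + g ≤ n - 1 → j₀ + g ≤ m - 1 →
        (∃ p < g, ((i₀ + p, j₀ + p), (i₀ + p + 1, j₀ + p + 1)) ∈ π.zip π.tail) →
        ∀ p < g, ((i₀ + p, j₀ + p), (i₀ + p + 1, j₀ + p + 1)) ∈ π.zip π.tail := by
  intro π hπ hmin i₀ j₀ hgi₀ hgj₀ hi₀g hj₀g hex p hp
  obtain ⟨hne, hhead, hlast, hchain⟩ := hπ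
  obtain ⟨p₀, hp₀g, hp₀⟩ := hex
  obtain ⟨K, hK⟩ := hgm
  have hg0 : 0 < g := by omega
  have hm1g : g ≤ m - 1 := Nat.le_of_dvd (by omega) ⟨K, hK⟩
  have hm3 : 3 ≤ m := by omega
  have hn3 : 3 ≤ n := by omega
  cases π with
  | nil => exact absurd rfl hne
  | cons a l =>
  simp only [List.head?_cons, Option.some.injEq] at hhead
  subst hhead
  simp only [List.tail_cons] at hp₀ hp ⊢
  -- the canonical comparison path
  set f : ℕ → ℕ × ℕ := fun t => if t < m - 1 then (t, t) else (t, m - 1) with hf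
  have hfstep : ∀ t, 0 ≤ t → t < 0 + (n - 1) → MStep (f t) (f (t + 1)) := by
    intro t _ _
    by_cases h1 : t < m - 1 <;> by_cases h2 : t + 1 < m - 1 <;>
      simp [hf, h1, h2, MStep] <;> omega
  have hcanpath := mpath_range'_map f (n - 1) 0 hfstep
  have hf0 : f 0 = (0, 0) := by
    have h01 : 0 < m - 1 := by omega
    simp [hf, h01]
  have hfl : f (0 + (n - 1)) = (n - 1, m - 1) := by
    have h01 : ¬ (n - 1 < m - 1) := by omega
    simp [hf, h01]
  rw [hf0, hfl] at hcanpath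
  -- canonical cost
  have hcost := acost_range'_map (interW r c d b U) f (n - 1) 0
  simp only [Nat.zero_add] at hcost
  rw [show n - 1 = (m - 1) + (n - m) from by omega, Finset.sum_range_add] at hcost
  have hdiagsum : ∀ t ∈ Finset.range (m - 1),
      interW r c d b U (f t) (f (t + 1)) = ((d t * b t : ℕ) : ℝ) := by
    intro t ht
    rw [Finset.mem_range] at ht
    have hft : f t = (t, t) := by simp [hf, ht]
    have hft1 : f (t + 1) = (t + 1, t + 1) := by
      by_cases h : t + 1 < m - 1
      · simp [hf, h]
      · simp [hf, h, Prod.mk.injEq]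
        omega
    rw [hft, hft1]
    have hrt : r t = t % g := hr t (by omega)
    have hct : c t = t % g := hc t (by omega)
    simp [interW, hrt, hct]
  have hvertsum : ∀ t ∈ Finset.range (n - m),
      interW r c d b U (f ((m - 1) + t)) (f ((m - 1) + t + 1)) = U := by
    intro t _
    have h1 : ¬ ((m - 1) + t < m - 1) := by omega
    have h2 : ¬ ((m - 1) + t + 1 < m - 1) := by omega
    have e1 : f ((m - 1) + t) = ((m - 1) + t, m - 1) := by simp [hf, h1]
    have e2 : f ((m - 1) + t + 1) = ((m - 1) + t + 1, m - 1) := by simp [hf, h2]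
    rw [e1, e2]
    simp [interW]
  rw [Finset.sum_congr rfl hdiagsum, Finset.sum_congr rfl hvertsum, Finset.sum_const,
    Finset.card_range, nsmul_eq_mul, ← Nat.cast_sum] at hcost
  rw [show m - 1 + (n - m) = n - 1 from by omega] at hcost
  -- bound on the canonical diagonal cost
  have hnA : n * A₃ ≤ A₄ := by omega
  have hKg' : K * g = m - 1 := by rw [mul_comm]; omega
  have hblocks := block_bound n m g A₂ A₃ A₄ d b hb01 hmn hm hg hnA hd0 hdlast hdother
    hbact K (le_of_eq hKg')
  rw [hKg'] at hblocks
  have hsumle : ∑ t ∈ Finset.range (m - 1), d t * b t ≤ K * A₄ + n ^ 2 * A₂ := by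
    have h2 : K * ((g - 2) * (n * A₂)) ≤ n ^ 2 * A₂ := by
      calc K * ((g - 2) * (n * A₂)) = (K * (g - 2)) * (n * A₂) := by ring
        _ ≤ n * (n * A₂) := Nat.mul_le_mul_right _ (by
            calc K * (g - 2) ≤ K * g := Nat.mul_le_mul_left _ (by omega)
              _ = m - 1 := hKg'
              _ ≤ n := by omega)
        _ = n ^ 2 * A₂ := by ring
    omega
  -- potential values at the endpoints
  have hΦ0 : phi n g A₃ A₄ U (0, 0) = 0 := by simp [phi]
  have hqm : (m - 1) % g = 0 := by rw [hK]; exact Nat.mul_mod_right g K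
  have hqd : (m - 1) / g = K := by rw [hK]; exact Nat.mul_div_cancel_left K hg0
  have hΦz : phi n g A₃ A₄ U (n - 1, m - 1) =
      (U : ℝ) * (((n - 1 : ℕ) : ℝ) - ((m - 1 : ℕ) : ℝ)) + (A₄ : ℝ) * (K : ℝ) := by
    rw [phi_zero n g A₃ A₄ U (n - 1) (m - 1) hqm, hqd]
  -- per-step slack facts along the minimal path
  have hboundall := mem_le_last l (0, 0) (n - 1, m - 1) hchain hlast
  have hkey : ∀ pr ∈ ((0, 0) :: l).zip l,
      0 ≤ interW r c d b U pr.1 pr.2 -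
          (phi n g A₃ A₄ U pr.2 - phi n g A₃ A₄ U pr.1) ∧
        (((pr.2.1 = pr.1.1 ∧ pr.2.2 = pr.1.2 + 1) ∨
          (pr.2.1 = pr.1.1 + 1 ∧ pr.2.2 = pr.1.2 ∧ pr.1.2 % g ≠ 0) ∨
          (pr.2.1 = pr.1.1 + 1 ∧ pr.2.2 = pr.1.2 + 1 ∧ r pr.1.1 ≠ c pr.1.2)) →
          (A₃ : ℝ) ≤ interW r c d b U pr.1 pr.2 -
            (phi n g A₃ A₄ U pr.2 - phi n g A₃ A₄ U pr.1)) := by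
    intro pr hpr
    have hms := chain'_zip l (0, 0) hchain pr hpr
    have hmem2 := hboundall pr.2 (List.mem_cons_of_mem _ (List.of_mem_zip hpr).2)
    exact slack_key n m r c d b U g A₂ A₃ A₄ hmn hm hg ⟨K, hK⟩ hr hc hA₃ hA₄big hd0 hdlast
      hbact hU hUbig pr.1 pr.2 hms hmem2.1 hmem2.2
  -- a minimal path has no bad arc
  have hgood : ∀ pr ∈ ((0, 0) :: l).zip l,
      ¬ ((pr.2.1 = pr.1.1 ∧ pr.2.2 = pr.1.2 + 1) ∨
         (pr.2.1 = pr.1.1 + 1 ∧ pr.2.2 = pr.1.2 ∧ pr.1.2 % g ≠ 0) ∨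
         (pr.2.1 = pr.1.1 + 1 ∧ pr.2.2 = pr.1.2 + 1 ∧ r pr.1.1 ≠ c pr.1.2)) := by
    intro pr hpr hbad
    have hsum0 : ∀ x ∈ (((0, 0) :: l).zip l).map
        (fun q => interW r c d b U q.1 q.2 -
          (phi n g A₃ A₄ U q.2 - phi n g A₃ A₄ U q.1)), 0 ≤ x := by
      intro x hx
      rw [List.mem_map] at hx
      obtain ⟨q, hq, rfl⟩ := hx
      exact (hkey q hq).1
    have hone := (hkey pr hpr).2 hbad
    have hmem : interW r c d b U pr.1 pr.2 -
        (phi n g A₃ A₄ U pr.2 - phi n g A₃ A₄ U pr.1) ∈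
        (((0, 0) :: l).zip l).map (fun q => interW r c d b U q.1 q.2 -
          (phi n g A₃ A₄ U q.2 - phi n g A₃ A₄ U q.1)) :=
      List.mem_map_of_mem hpr
    have hsl := List.single_le_sum hsum0 _ hmem
    have htel := telescope (phi n g A₃ A₄ U) l (0, 0) (n - 1, m - 1) hlast
    have hdecomp : acost (interW r c d b U) ((0, 0) :: l) =
        (phi n g A₃ A₄ U (n - 1, m - 1) - phi n g A₃ A₄ U (0, 0)) +
          ((((0, 0) :: l).zip l).map (fun q => interW r c d b U q.1 q.2 -
            (phi n g A₃ A₄ U q.2 - phi n g A₃ A₄ U q.1))).sum := by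
      rw [← htel, ← sum_map_add]
      simp only [acost, List.tail_cons]
      have heq : (fun (q : (ℕ × ℕ) × (ℕ × ℕ)) => interW r c d b U q.1 q.2) =
          fun q => (phi n g A₃ A₄ U q.2 - phi n g A₃ A₄ U q.1) +
            (interW r c d b U q.1 q.2 -
              (phi n g A₃ A₄ U q.2 - phi n g A₃ A₄ U q.1)) := by
        funext q
        ring
      rw [heq]
    have hmincan := hmin _ hcanpath
    rw [hcost] at hmincan
    rw [hdecomp] at hmincan
    have hcastb : ((∑ t ∈ Finset.range (m - 1), d t * b t : ℕ) : ℝ) ≤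
        ((K * A₄ + n ^ 2 * A₂ : ℕ) : ℝ) := Nat.cast_le.2 hsumle
    have hA₃R : ((n ^ 2 * A₂ : ℕ) : ℝ) < (A₃ : ℝ) := Nat.cast_lt.2 hA₃big
    have hc1 : ((n - 1 : ℕ) : ℝ) - ((m - 1 : ℕ) : ℝ) = ((n - m : ℕ) : ℝ) := by
      rw [Nat.cast_sub (by omega), Nat.cast_sub (by omega), Nat.cast_sub hmn]
      ring
    rw [hΦz, hΦ0, hc1] at hmincan
    push_cast at hcastb hA₃R hmincan
    linarith
  -- classification of the arcs of the minimal path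
  have hform : ∀ pr ∈ ((0, 0) :: l).zip l,
      (pr.2.1 = pr.1.1 + 1 ∧ pr.2.2 = pr.1.2 ∧ pr.1.2 % g = 0) ∨
        (pr.2 = (pr.1.1 + 1, pr.1.2 + 1)) := by
    intro pr hpr
    have hms := chain'_zip l (0, 0) hchain pr hpr
    have hng := hgood pr hpr
    rcases hms with ⟨e1, e2⟩ | ⟨e1, e2⟩ | ⟨e1, e2⟩
    · by_cases h0 : pr.1.2 % g = 0
      · exact Or.inl ⟨e1, e2, h0⟩
      · exact absurd (Or.inr (Or.inl ⟨e1, e2, h0⟩)) hng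
    · exact absurd (Or.inl ⟨e1, e2⟩) hng
    · right
      exact Prod.ext_iff.mpr ⟨e1, e2⟩
  have hmodt : ∀ t, t < g → (j₀ + t) % g = t := by
    intro t ht
    obtain ⟨q, rfl⟩ := hgj₀
    rw [Nat.mul_add_mod]
    exact Nat.mod_eq_of_lt ht
  -- going up along the gadget diagonal
  have hup : ∀ k, p₀ + k < g →
      ((i₀ + (p₀ + k), j₀ + (p₀ + k)), (i₀ + (p₀ + k) + 1, j₀ + (p₀ + k) + 1)) ∈
        ((0, 0) :: l).zip l := by
    intro k
    induction k with
    | zero => intro _; simpa using hp₀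
    | succ k ih =>
        intro hk
        have hA := ih (by omega)
        have hvne : ((i₀ + (p₀ + k) + 1, j₀ + (p₀ + k) + 1) : ℕ × ℕ) ≠ (n - 1, m - 1) := by
          intro h
          have h2 : j₀ + (p₀ + k) + 1 = m - 1 := congrArg Prod.snd h
          omega
        obtain ⟨w', hw'⟩ := succ_step l (0, 0) (n - 1, m - 1) _ hA hlast hvne
        rcases hform _ hw' with ⟨e1, e2, e3⟩ | heq
        · exfalso
          rw [show j₀ + (p₀ + k) + 1 = j₀ + (p₀ + k + 1) from by omega,
            hmodt (p₀ + k + 1) (by omega)] at e3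
          omega
        · simp only at heq
          subst heq
          rw [show i₀ + (p₀ + (k + 1)) = i₀ + (p₀ + k) + 1 from by omega,
            show j₀ + (p₀ + (k + 1)) = j₀ + (p₀ + k) + 1 from by omega]
          exact hw'
  -- going down along the gadget diagonal
  have hdown : ∀ k, k ≤ p₀ →
      ((i₀ + (p₀ - k), j₀ + (p₀ - k)), (i₀ + (p₀ - k) + 1, j₀ + (p₀ - k) + 1)) ∈
        ((0, 0) :: l).zip l := by
    intro k
    induction k with
    | zero => intro _; simpa using hp₀
    | succ k ih =>
        intro hk
        have hA := ih (by omega)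
        have hune : ((i₀ + (p₀ - k), j₀ + (p₀ - k)) : ℕ × ℕ) ≠ (0, 0) := by
          intro h
          have h2 : j₀ + (p₀ - k) = 0 := congrArg Prod.snd h
          omega
        obtain ⟨x, hx⟩ := pred_step l (0, 0) _ hA hune
        rcases hform _ hx with ⟨e1, e2, e3⟩ | heq
        · exfalso
          simp only at e2 e3
          rw [← e2, hmodt (p₀ - k) (by omega)] at e3
          omega
        · simp only at heq
          obtain ⟨x1, x2⟩ := x
          simp only [Prod.mk.injEq] at heq
          obtain ⟨hx1, hx2⟩ := heq
          have ex1 : x1 = i₀ + (p₀ - (k + 1)) := by omega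
          have ex2 : x2 = j₀ + (p₀ - (k + 1)) := by omega
          rw [ex1, ex2] at hx
          rw [show i₀ + (p₀ - (k + 1)) + 1 = i₀ + (p₀ - k) from by omega,
            show j₀ + (p₀ - (k + 1)) + 1 = j₀ + (p₀ - k) from by omega]
          exact hx
  rcases le_or_gt p p₀ with hle | hlt
  · have h := hdown (p₀ - p) (by omega)
    rw [show p₀ - (p₀ - p) = p from by omega] at h
    exact h
  · have h := hup (p - p₀) (by omega)
    rw [show p₀ + (p - p₀) = p from by omega] at h
    exact h
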